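/- If P is an optimal k-pack of an in-semicomplete digraph D, then there exists a coloring of D orthogonal to P (i.e., the Aharoni-Hartman-Hoffman Conjecture holds for in-semicomplete digraphs). -/

import Mathlib

open scoped Classical

namespace DigraphPaper

variable {V : Type*} [Fintype V] [DecidableEq V]

/-- Vertices `u` and `v` are adjacent in the digraph with arc relation `A`. -/
def DAdj (A : V → V → Prop) (u v : V) : Prop := A u v ∨ A v u

/-- A set of vertices is stable if its vertices are pairwise nonadjacent. -/
def DStable (A : V → V → Prop) (S : Set V) : Prop :=
  ∀ u ∈ S, ∀ v ∈ S, u ≠ v → ¬ DAdj A u v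

/-- The in-neighborhood of every vertex induces a semicomplete digraph. -/
def InSemicomplete (A : V → V → Prop) : Prop :=
  ∀ v u w : V, A u v → A w v → u ≠ w → DAdj A u w

/-- The out-neighborhood of every vertex induces a semicomplete digraph. -/
def OutSemicomplete (A : V → V → Prop) : Prop :=
  ∀ v u w : V, A v u → A v w → u ≠ w → DAdj A u w

/-- A path: a nonempty list of distinct vertices with consecutive arcs. -/
def IsPath (A : V → V → Prop) (p : List V) : Prop :=
  p ≠ [] ∧ p.Nodup ∧ p.Chain' A

/-- A collection of pairwise vertex-disjoint lists. -/
def PDisjoint (P : Finset (List V)) : Prop :=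
  ∀ p ∈ P, ∀ q ∈ P, p ≠ q → ∀ x : V, x ∈ p → x ∉ q

/-- A path partition: vertex-disjoint paths covering all vertices. -/
def IsPathPartition (A : V → V → Prop) (P : Finset (List V)) : Prop :=
  (∀ p ∈ P, IsPath A p) ∧ PDisjoint P ∧ ∀ v : V, ∃ p ∈ P, v ∈ p

/-- The k-norm of a collection of paths. -/
def knorm (k : ℕ) (P : Finset (List V)) : ℕ := ∑ p ∈ P, min p.length k

/-- The set of final vertices of the paths in `P`. -/
def pends (P : Finset (List V)) : Set V := {x | ∃ p ∈ P, p.getLast? = some x}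

/-- A partial k-coloring: k pairwise disjoint stable sets. -/
def IsPartialKColoring (A : V → V → Prop) (k : ℕ) (C : Fin k → Finset V) : Prop :=
  (∀ i, DStable A (C i : Set V)) ∧ ∀ i j, i ≠ j → Disjoint (C i) (C j)

/-- Orthogonality of a partial k-coloring to a path partition:
each path meets `min |P| k` distinct color classes. -/
def OrthoPC (k : ℕ) (C : Fin k → Finset V) (P : Finset (List V)) : Prop :=
  ∀ p ∈ P, min p.length k ≤ (Finset.univ.filter fun i : Fin k => ∃ x ∈ p, x ∈ C i).card

/-- A k-optimal path partition. -/
def KOptimal (A : V → V → Prop) (k : ℕ) (P : Finset (List V)) : Prop :=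
  IsPathPartition A P ∧
    ∀ Q : Finset (List V), IsPathPartition A Q → knorm k P ≤ knorm k Q

/-- A k-pack: at most k vertex-disjoint paths. -/
def IsKPack (A : V → V → Prop) (k : ℕ) (P : Finset (List V)) : Prop :=
  P.card ≤ k ∧ (∀ p ∈ P, IsPath A p) ∧ PDisjoint P

/-- Weight of a k-pack: number of covered vertices. -/
def weight (P : Finset (List V)) : ℕ := ∑ p ∈ P, p.length

/-- The set of vertices covered by the paths of `P`. -/
def cover (P : Finset (List V)) : Finset V := P.biUnion List.toFinset

/-- An optimal k-pack. -/
def OptimalKPack (A : V → V → Prop) (k : ℕ) (P : Finset (List V)) : Prop :=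
  IsKPack A k P ∧ ∀ Q : Finset (List V), IsKPack A k Q → weight Q ≤ weight P

/-- A coloring: a partition of the vertex set into stable sets. -/
def IsColoring (A : V → V → Prop) (C : Finset (Finset V)) : Prop :=
  (∀ c ∈ C, DStable A (c : Set V)) ∧ (∀ c ∈ C, c.Nonempty) ∧
  (∀ c ∈ C, ∀ c' ∈ C, c ≠ c' → Disjoint c c') ∧ ∀ v : V, ∃ c ∈ C, v ∈ c

/-- Orthogonality of a coloring to a k-pack:
each color class meets `min |C| k` distinct paths. -/
def OrthoCP (k : ℕ) (C : Finset (Finset V)) (P : Finset (List V)) : Prop :=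
  ∀ c ∈ C, min c.card k ≤ (P.filter fun p => ∃ x ∈ c, x ∈ p).card

/-- π_k(D): minimum k-norm of a path partition. -/
noncomputable def pik (A : V → V → Prop) (k : ℕ) : ℕ :=
  sInf {n | ∃ P : Finset (List V), IsPathPartition A P ∧ knorm k P = n}

/-- α_k(D): maximum weight of a partial k-coloring. -/
noncomputable def alphak (A : V → V → Prop) (k : ℕ) : ℕ :=
  sSup {n | ∃ C : Fin k → Finset V, IsPartialKColoring A k C ∧ ∑ i, (C i).card = n}

/-- π(D): minimum number of paths in a path partition. -/
noncomputable def piNum (A : V → V → Prop) : ℕ :=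
  sInf {n | ∃ P : Finset (List V), IsPathPartition A P ∧ P.card = n}

/-- α(D): maximum size of a stable set. -/
noncomputable def alphaNum (A : V → V → Prop) : ℕ :=
  sSup {n | ∃ S : Finset V, DStable A (S : Set V) ∧ S.card = n}

/-- k-norm of a coloring. -/
def cnorm (k : ℕ) (C : Finset (Finset V)) : ℕ := ∑ c ∈ C, min c.card k

/-- χ_k(D): minimum k-norm of a coloring. -/
noncomputable def chik (A : V → V → Prop) (k : ℕ) : ℕ :=
  sInf {n | ∃ C : Finset (Finset V), IsColoring A C ∧ cnorm k C = n}

/-- λ_k(D): maximum weight of a k-pack. -/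
noncomputable def lamk (A : V → V → Prop) (k : ℕ) : ℕ :=
  sSup {n | ∃ P : Finset (List V), IsKPack A k P ∧ weight P = n}

/-! ### Auxiliary lemmas -/

set_option linter.unusedSectionVars false

section Aux

variable {A : V → V → Prop}

lemma isPath_singleton (A : V → V → Prop) (x : V) : IsPath A [x] :=
  ⟨by simp, by simp, List.isChain_singleton _⟩

lemma isPath_concat {p : List V} {a b : V} (h : IsPath A (p ++ [a]))
    (hb : b ∉ p ++ [a]) (hab : A a b) : IsPath A ((p ++ [a]) ++ [b]) := by
  obtain ⟨-, hnd, hch⟩ := h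
  refine ⟨by simp, ?_, ?_⟩
  · rw [List.nodup_append]
    exact ⟨hnd, List.nodup_singleton _, fun x hx y hy hxy => hb (by simp at hy; subst hy; subst hxy; exact hx)⟩
  · rw [List.Chain', List.isChain_append]
    refine ⟨hch, List.isChain_singleton _, ?_⟩
    intro x hx y hy
    simp only [List.getLast?_concat, Option.mem_def, Option.some.injEq] at hx
    simp only [List.head?_cons, Option.mem_def, Option.some.injEq] at hy
    subst hx; subst hy; exact hab

private lemma merge_base {p : List V} {a b : V} (hp : IsPath A (p ++ [a]))
    (hdis : ∀ x ∈ p ++ [a], x ∉ ([] : List V) ++ [b]) (hab : A a b) :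
    ∃ z : List V, IsPath A (z ++ [b]) ∧
      (z ++ [b]).toFinset = (p ++ [a]).toFinset ∪ (([] : List V) ++ [b]).toFinset := by
  refine ⟨p ++ [a], isPath_concat hp (fun hb => hdis b hb (by simp)) hab, ?_⟩
  ext x; simp

set_option maxHeartbeats 1000000 in
/-- Merging lemma for in-semicomplete digraphs. -/
lemma merge_lemma (hin : InSemicomplete A) :
    ∀ (n : ℕ) (p q : List V) (a b : V), p.length + q.length ≤ n →
    IsPath A (p ++ [a]) → IsPath A (q ++ [b]) →
    (∀ x ∈ p ++ [a], x ∉ q ++ [b]) → A a b →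
    ∃ z : List V, IsPath A (z ++ [b]) ∧
      (z ++ [b]).toFinset = (p ++ [a]).toFinset ∪ (q ++ [b]).toFinset := by
  intro n
  induction n with
  | zero =>
    intro p q a b hlen hp hq hdis hab
    have hq0 : q = [] := by
      cases q with
      | nil => rfl
      | cons y l => simp at hlen
    subst hq0
    exact merge_base hp hdis hab
  | succ n ih =>
    intro p q a b hlen hp hq hdis hab
    rcases q.eq_nil_or_concat with rfl | ⟨q₀, c, rfl⟩
    · exact merge_base hp hdis hab
    · rw [List.concat_eq_append] at *
      have hqch := hq.2.2
      rw [List.Chain', List.isChain_append] at hqch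
      have hcb : A c b := by
        refine hqch.2.2 c ?_ b (by simp)
        simp [List.getLast?_concat]
      have hqnd := List.nodup_append.mp hq.2.1
      have hqpath : IsPath A (q₀ ++ [c]) := ⟨by simp, hqnd.1, hqch.1⟩
      have hac : a ≠ c := fun h => hdis a (by simp) (by simp [h])
      have hbq : b ∉ (q₀ ++ [c]) := fun hb => hqnd.2.2 b hb b (by simp) rfl
      rcases hin b a c hab hcb hac with h | h
      · -- A a c : merge p++[a] with q₀++[c]
        obtain ⟨z, hz, hzf⟩ := ih p q₀ a c (by simp at hlen ⊢; omega)
          hp hqpath (fun x hx hxq => hdis x hx (List.mem_append_left _ hxq)) h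
        have hbz : b ∉ z ++ [c] := by
          intro hb
          have : b ∈ (p ++ [a]).toFinset ∪ (q₀ ++ [c]).toFinset := by
            rw [← hzf]; exact List.mem_toFinset.mpr hb
          simp only [Finset.mem_union, List.mem_toFinset] at this
          rcases this with h' | h'
          · exact hdis b h' (by simp)
          · exact hbq h'
        refine ⟨z ++ [c], isPath_concat hz hbz hcb, ?_⟩
        have hmem : ∀ y, y ∈ z ++ [c] ↔ y ∈ p ++ [a] ∨ y ∈ q₀ ++ [c] := by
          intro y
          rw [← List.mem_toFinset, hzf]
          simp
          tauto
        ext x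
        simp only [List.mem_toFinset, Finset.mem_union, List.mem_append, List.mem_singleton]
        have := hmem x
        simp only [List.mem_append, List.mem_singleton] at this
        tauto
      · -- A c a : merge q₀++[c] with p++[a]
        obtain ⟨z, hz, hzf⟩ := ih q₀ p c a (by simp at hlen ⊢; omega)
          hqpath hp (fun x hx hxp => hdis x hxp (List.mem_append_left _ hx)) h
        have hbz : b ∉ z ++ [a] := by
          intro hb
          have : b ∈ (q₀ ++ [c]).toFinset ∪ (p ++ [a]).toFinset := by
            rw [← hzf]; exact List.mem_toFinset.mpr hb
          simp only [Finset.mem_union, List.mem_toFinset] at this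
          rcases this with h' | h'
          · exact hbq h'
          · exact hdis b h' (by simp)
        refine ⟨z ++ [a], isPath_concat hz hbz hab, ?_⟩
        have hmem : ∀ y, y ∈ z ++ [a] ↔ y ∈ q₀ ++ [c] ∨ y ∈ p ++ [a] := by
          intro y
          rw [← List.mem_toFinset, hzf]
          simp
          tauto
        ext x
        simp only [List.mem_toFinset, Finset.mem_union, List.mem_append, List.mem_singleton]
        have := hmem x
        simp only [List.mem_append, List.mem_singleton] at this
        tauto

end Aux
section Surgery

variable {A : V → V → Prop} {k : ℕ} {P : Finset (List V)}

lemma replace_one (hP : OptimalKPack A k P) {p : List V} (hp : p ∈ P) {z : List V}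
    (hz : IsPath A z)
    (hdis : ∀ q ∈ P, q ≠ p → ∀ x ∈ z, x ∉ q) :
    z.length ≤ p.length := by
  obtain ⟨⟨hcard, hpaths, hpd⟩, hopt⟩ := hP
  have hzne : z ≠ [] := hz.1
  have hzP : z ∉ P.erase p := by
    intro h
    exact hdis z (Finset.mem_of_mem_erase h) (Finset.ne_of_mem_erase h)
      (z.head hzne) (List.head_mem hzne) (List.head_mem hzne)
  have h1 : (P.erase p).card = P.card - 1 := Finset.card_erase_of_mem hp
  have h2 : 1 ≤ P.card := Finset.card_pos.mpr ⟨p, hp⟩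
  have hQ : IsKPack A k (insert z (P.erase p)) := by
    refine ⟨?_, ?_, ?_⟩
    · have := Finset.card_insert_le z (P.erase p)
      omega
    · intro w hw
      rcases Finset.mem_insert.mp hw with rfl | hw
      · exact hz
      · exact hpaths w (Finset.mem_of_mem_erase hw)
    · intro w1 h1' w2 h2' hne x hx1 hx2
      rcases Finset.mem_insert.mp h1' with h1e | h1m
      · rcases Finset.mem_insert.mp h2' with h2e | h2m
        · exact hne (h1e.trans h2e.symm)
        · exact hdis w2 (Finset.mem_of_mem_erase h2m) (Finset.ne_of_mem_erase h2m) x (h1e ▸ hx1) hx2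
      · rcases Finset.mem_insert.mp h2' with h2e | h2m
        · exact hdis w1 (Finset.mem_of_mem_erase h1m) (Finset.ne_of_mem_erase h1m) x (h2e ▸ hx2) hx1
        · exact hpd w1 (Finset.mem_of_mem_erase h1m) w2 (Finset.mem_of_mem_erase h2m) hne x hx1 hx2
  have hle := hopt _ hQ
  have e1 : weight (insert z (P.erase p)) = z.length + weight (P.erase p) := by
    rw [weight, Finset.sum_insert hzP]; rfl
  have e2 : weight (P.erase p) + p.length = weight P := Finset.sum_erase_add _ _ hp
  rw [e1] at hle
  omega

lemma replace_two (hP : OptimalKPack A k P) {p q : List V} (hp : p ∈ P) (hq : q ∈ P)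
    (hpq : p ≠ q) {z₁ z₂ : List V} (hz₁ : IsPath A z₁) (hz₂ : IsPath A z₂)
    (hdis : ∀ w ∈ P, w ≠ p → w ≠ q → ∀ x, (x ∈ z₁ ∨ x ∈ z₂) → x ∉ w)
    (h12 : ∀ x ∈ z₁, x ∉ z₂) :
    z₁.length + z₂.length ≤ p.length + q.length := by
  obtain ⟨⟨hcard, hpaths, hpd⟩, hopt⟩ := hP
  set rest := (P.erase p).erase q with hrest
  have hqp : q ∈ P.erase p := Finset.mem_erase.mpr ⟨fun h => hpq h.symm, hq⟩
  have hmem_rest : ∀ w ∈ rest, w ∈ P ∧ w ≠ p ∧ w ≠ q := by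
    intro w hw
    have h1 := Finset.mem_of_mem_erase hw
    exact ⟨Finset.mem_of_mem_erase h1, Finset.ne_of_mem_erase h1, Finset.ne_of_mem_erase hw⟩
  have hz₂r : z₂ ∉ rest := by
    intro h
    obtain ⟨hw, hwp, hwq⟩ := hmem_rest _ h
    exact hdis z₂ hw hwp hwq (z₂.head hz₂.1) (Or.inr (List.head_mem hz₂.1)) (List.head_mem hz₂.1)
  have h12' : z₁ ≠ z₂ := by
    intro h
    exact h12 (z₁.head hz₁.1) (List.head_mem hz₁.1) (h ▸ List.head_mem hz₁.1)
  have hz₁r : z₁ ∉ insert z₂ rest := by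
    intro h
    rcases Finset.mem_insert.mp h with h | h
    · exact h12' h
    · obtain ⟨hw, hwp, hwq⟩ := hmem_rest _ h
      exact hdis z₁ hw hwp hwq (z₁.head hz₁.1) (Or.inl (List.head_mem hz₁.1)) (List.head_mem hz₁.1)
  have hc2 : 2 ≤ P.card := by
    have : ({p, q} : Finset (List V)) ⊆ P := by
      intro w hw; rcases Finset.mem_insert.mp hw with rfl | hw
      · exact hp
      · exact (Finset.mem_singleton.mp hw) ▸ hq
    have := Finset.card_le_card this
    rwa [Finset.card_insert_of_notMem (by simpa using hpq), Finset.card_singleton] at this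
  have hc1 : rest.card = P.card - 2 := by
    rw [hrest, Finset.card_erase_of_mem hqp, Finset.card_erase_of_mem hp]
    omega
  have hQ : IsKPack A k (insert z₁ (insert z₂ rest)) := by
    refine ⟨?_, ?_, ?_⟩
    · have i1 := Finset.card_insert_le z₁ (insert z₂ rest)
      have i2 := Finset.card_insert_le z₂ rest
      omega
    · intro w hw
      rcases Finset.mem_insert.mp hw with rfl | hw
      · exact hz₁
      rcases Finset.mem_insert.mp hw with rfl | hw
      · exact hz₂
      · exact hpaths w (hmem_rest _ hw).1
    · intro w1 h1' w2 h2' hne x hx1 hx2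
      have mem2 : ∀ y, y ∈ z₁ ∨ y ∈ z₂ → ∀ w ∈ rest, y ∉ w := by
        intro y hy w hw
        obtain ⟨hw1, hw2, hw3⟩ := hmem_rest _ hw
        exact hdis w hw1 hw2 hw3 y hy
      have getm : ∀ w, w ∈ insert z₁ (insert z₂ rest) → w = z₁ ∨ w = z₂ ∨ w ∈ rest := by
        intro w hw
        rcases Finset.mem_insert.mp hw with h | hw
        · exact Or.inl h
        rcases Finset.mem_insert.mp hw with h | hw
        · exact Or.inr (Or.inl h)
        · exact Or.inr (Or.inr hw)
      rcases getm _ h1' with h1e | h1e | h1m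
      · rcases getm _ h2' with h2e | h2e | h2m
        · exact hne (h1e.trans h2e.symm)
        · exact h12 x (h1e ▸ hx1) (h2e ▸ hx2)
        · exact mem2 x (Or.inl (h1e ▸ hx1)) w2 h2m hx2
      · rcases getm _ h2' with h2e | h2e | h2m
        · exact h12 x (h2e ▸ hx2) (h1e ▸ hx1)
        · exact hne (h1e.trans h2e.symm)
        · exact mem2 x (Or.inr (h1e ▸ hx1)) w2 h2m hx2
      · rcases getm _ h2' with h2e | h2e | h2m
        · exact mem2 x (Or.inl (h2e ▸ hx2)) w1 h1m hx1
        · exact mem2 x (Or.inr (h2e ▸ hx2)) w1 h1m hx1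
        · exact hpd w1 (hmem_rest _ h1m).1 w2 (hmem_rest _ h2m).1 hne x hx1 hx2
  have hle := hopt _ hQ
  have e1 : weight (insert z₁ (insert z₂ rest)) = z₁.length + (z₂.length + weight rest) := by
    rw [weight, Finset.sum_insert hz₁r, Finset.sum_insert hz₂r]; rfl
  have e2 : weight rest + q.length = weight (P.erase p) := Finset.sum_erase_add _ _ hqp
  have e3 : weight (P.erase p) + p.length = weight P := Finset.sum_erase_add _ _ hp
  rw [e1] at hle
  omega

lemma add_path (hP : OptimalKPack A k P) {z : List V} (hz : IsPath A z)
    (hdis : ∀ w ∈ P, ∀ x ∈ z, x ∉ w) (hcard : P.card < k) : False := by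
  obtain ⟨⟨hc, hpaths, hpd⟩, hopt⟩ := hP
  have hzP : z ∉ P := fun h => hdis z h (z.head hz.1) (List.head_mem hz.1) (List.head_mem hz.1)
  have hQ : IsKPack A k (insert z P) := by
    refine ⟨?_, ?_, ?_⟩
    · have := Finset.card_insert_le z P; omega
    · intro w hw
      rcases Finset.mem_insert.mp hw with rfl | hw
      · exact hz
      · exact hpaths w hw
    · intro w1 h1' w2 h2' hne x hx1 hx2
      rcases Finset.mem_insert.mp h1' with h1e | h1m
      · rcases Finset.mem_insert.mp h2' with h2e | h2m
        · exact hne (h1e.trans h2e.symm)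
        · exact hdis w2 h2m x (h1e ▸ hx1) hx2
      · rcases Finset.mem_insert.mp h2' with h2e | h2m
        · exact hdis w1 h1m x (h2e ▸ hx2) hx1
        · exact hpd w1 h1m w2 h2m hne x hx1 hx2
  have hle := hopt _ hQ
  have e1 : weight (insert z P) = z.length + weight P := by
    rw [weight, Finset.sum_insert hzP]; rfl
  have : 1 ≤ z.length := by
    cases z with
    | nil => exact absurd rfl hz.1
    | cons _ _ => simp
  omega

end Surgery
section Struct

variable {A : V → V → Prop} {k : ℕ} {P : Finset (List V)}

/-- `v` is uncovered by the pack `P`. -/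
def Unc (P : Finset (List V)) (v : V) : Prop := ∀ p ∈ P, v ∉ p

lemma take_getLast? {p : List V} {i : ℕ} (h : i < p.length) :
    (p.take (i+1)).getLast? = some (p.get ⟨i, h⟩) := by
  rw [List.take_succ]
  have : p[i]? = some (p.get ⟨i, h⟩) := by
    rw [List.getElem?_eq_getElem h]; rfl
  rw [this]
  exact List.getLast?_concat

lemma head?_eq_get {p : List V} {i : ℕ} (h : i < p.length) :
    (p.drop i).head? = some (p.get ⟨i, h⟩) := by
  rw [List.head?_drop, List.getElem?_eq_getElem h]; rfl

lemma chain'_take {R : V → V → Prop} {p : List V} (h : p.Chain' R) (n : ℕ) :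
    (p.take n).Chain' R := by
  have := (List.take_append_drop n p) ▸ h
  exact (List.isChain_append.mp this).1

lemma chain'_drop {R : V → V → Prop} {p : List V} (h : p.Chain' R) (n : ℕ) :
    (p.drop n).Chain' R := by
  have := (List.take_append_drop n p) ▸ h
  exact (List.isChain_append.mp this).2.1

lemma nodup_take_drop {p : List V} (h : p.Nodup) (n : ℕ) :
    (p.take n).Nodup ∧ (p.drop n).Nodup ∧ ∀ x ∈ p.take n, x ∉ p.drop n := by
  have := (List.take_append_drop n p) ▸ h
  rw [List.nodup_append] at this
  exact ⟨this.1, this.2.1, fun x hx hx' => this.2.2 x hx x hx' rfl⟩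

lemma card_eq_k (hP : OptimalKPack A k P) {r : V} (hr : Unc P r) : P.card = k := by
  rcases lt_or_eq_of_le hP.1.1 with h | h
  · exact absurd h (fun h => add_path hP (isPath_singleton A r)
      (fun w hw x hx => by simp at hx; exact hx ▸ hr w hw) h)
  · exact h

/-- An uncovered vertex sends no arc to any covered vertex. -/
lemma no_unc_to_cover (hP : OptimalKPack A k P) (hin : InSemicomplete A)
    {r : V} (hr : Unc P r) {p : List V} (hp : p ∈ P) :
    ∀ x ∈ p, ¬ A r x := by
  have hpd := hP.1.2.2
  have hpath := hP.1.2.1 p hp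
  have hrp : r ∉ p := hr p hp
  have key : ∀ i (h : i < p.length), ¬ A r (p.get ⟨i, h⟩) := by
    intro i
    induction i with
    | zero =>
      intro h harc
      -- prepend r to p
      have hz : IsPath A (r :: p) := by
        refine ⟨by simp, by simp [hrp, hpath.2.1], ?_⟩
        rw [List.Chain', List.isChain_cons]
        refine ⟨?_, hpath.2.2⟩
        intro y hy
        have : p.head? = some (p.get ⟨0, h⟩) := by
          have := head?_eq_get h; simpa using this
        rw [this] at hy
        simp at hy
        exact hy ▸ harc
      have hle := replace_one hP hp hz (fun q hq hqp x hx => by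
        rcases List.mem_cons.mp hx with rfl | hx
        · exact hr q hq
        · exact hpd p hp q hq (fun e => hqp e.symm) x hx)
      simp at hle
    | succ i ih =>
      intro h harc
      have hi : i < p.length := Nat.lt_of_succ_lt h
      have hchain : A (p.get ⟨i, hi⟩) (p.get ⟨i+1, h⟩) := by
        have := List.isChain_iff_getElem.mp hpath.2.2 i (by omega)
        convert this using 2
        all_goals rfl
      have hne : r ≠ p.get ⟨i, hi⟩ := fun e => hrp (e ▸ List.get_mem p ⟨i, hi⟩)
      rcases hin (p.get ⟨i+1, h⟩) r (p.get ⟨i, hi⟩) harc hchain hne with h' | h'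
      · exact ih hi h'
      · -- insert r between positions i and i+1
        set z := p.take (i+1) ++ r :: p.drop (i+1) with hzdef
        have hnd := nodup_take_drop hpath.2.1 (i+1)
        have hz : IsPath A z := by
          refine ⟨by simp [hzdef], ?_, ?_⟩
          · rw [hzdef, List.nodup_append]
            refine ⟨hnd.1, ?_, ?_⟩
            · exact List.nodup_cons.mpr ⟨fun hrd => hrp (List.mem_of_mem_drop hrd), hnd.2.1⟩
            · intro x hx y hx' hxy
              subst hxy
              rcases List.mem_cons.mp hx' with rfl | hx'
              · exact hrp (List.mem_of_mem_take hx)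
              · exact hnd.2.2 x hx hx'
          · rw [hzdef, List.Chain', List.isChain_append]
            refine ⟨chain'_take hpath.2.2 _, ?_, ?_⟩
            · rw [List.isChain_cons]
              refine ⟨?_, chain'_drop hpath.2.2 _⟩
              intro y hy
              rw [head?_eq_get h] at hy
              simp at hy
              exact hy ▸ harc
            · intro x hx y hy
              rw [take_getLast? hi] at hx
              simp at hx hy
              exact hx ▸ hy ▸ h'
        have hle := replace_one hP hp hz (fun q hq hqp x hx => by
          rw [hzdef] at hx
          rcases List.mem_append.mp hx with hx | hx
          · exact hpd p hp q hq (fun e => hqp e.symm) x (List.mem_of_mem_take hx)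
          · rcases List.mem_cons.mp hx with rfl | hx
            · exact hr q hq
            · exact hpd p hp q hq (fun e => hqp e.symm) x (List.mem_of_mem_drop hx))
        have hlen : z.length = p.length + 1 := by
          rw [hzdef]
          simp
          omega
        omega
  intro x hx harc
  obtain ⟨⟨i, hi⟩, rfl⟩ := List.mem_iff_get.mp hx
  exact key i hi harc

/-- Extending a path at position `i` with a fully-uncovered path `l'`. -/
lemma extend_path_le (hP : OptimalKPack A k P) {p : List V} (hp : p ∈ P)
    {i : ℕ} (h : i < p.length) {l' : List V} (hl' : IsPath A l')
    (hun : ∀ x ∈ l', Unc P x)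
    (harc : A (p.get ⟨i, h⟩) (l'.head hl'.1)) :
    i + 1 + l'.length ≤ p.length := by
  have hpd := hP.1.2.2
  have hpath := hP.1.2.1 p hp
  set z := p.take (i+1) ++ l' with hzdef
  have hz : IsPath A z := by
    refine ⟨by simp [hzdef, hl'.1], ?_, ?_⟩
    · rw [hzdef, List.nodup_append]
      refine ⟨(nodup_take_drop hpath.2.1 (i+1)).1, hl'.2.1, ?_⟩
      intro x hx y hx' hxy
      subst hxy
      exact hun x hx' p hp (List.mem_of_mem_take hx)
    · rw [hzdef, List.Chain', List.isChain_append]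
      refine ⟨chain'_take hpath.2.2 _, hl'.2.2, ?_⟩
      intro x hx y hy
      rw [take_getLast? h] at hx
      rw [List.head?_eq_head hl'.1] at hy
      simp at hx hy
      exact hx ▸ hy ▸ harc
  have hle := replace_one hP hp hz (fun q hq hqp x hx => by
    rw [hzdef] at hx
    rcases List.mem_append.mp hx with hx | hx
    · exact hpd p hp q hq (fun e => hqp e.symm) x (List.mem_of_mem_take hx)
    · exact hun x hx q hq)
  have hlen : z.length = (i+1) + l'.length := by
    rw [hzdef]; simp; omega
  omega

/-- A fully uncovered path is no longer than any path of the pack. -/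
lemma unc_path_le (hP : OptimalKPack A k P) {p : List V} (hp : p ∈ P)
    {l' : List V} (hl' : IsPath A l') (hun : ∀ x ∈ l', Unc P x) :
    l'.length ≤ p.length :=
  replace_one hP hp hl' (fun q hq _ x hx => hun x hx q hq)

end Struct
section Acyclic

variable {A : V → V → Prop}

/-- The relation of a finite set of arcs. -/
def SRel (S : Finset (V × V)) : V → V → Prop := fun a b => (a, b) ∈ S

/-- Acyclicity of a finite arc set. -/
def Acy (S : Finset (V × V)) : Prop := ∀ x : V, ¬ Relation.TransGen (SRel S) x x

lemma transGen_insert {S : Finset (V × V)} {u v x y : V}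
    (h : Relation.TransGen (SRel (insert (u,v) S)) x y) :
    Relation.TransGen (SRel S) x y ∨
      (Relation.ReflTransGen (SRel S) x u ∧ Relation.ReflTransGen (SRel S) v y) := by
  induction h using Relation.TransGen.head_induction_on with
  | single h' =>
    rcases Finset.mem_insert.mp h' with he | hm
    · rw [Prod.mk.injEq] at he
      exact Or.inr ⟨he.1 ▸ Relation.ReflTransGen.refl, he.2 ▸ Relation.ReflTransGen.refl⟩
    · exact Or.inl (Relation.TransGen.single hm)
  | head h' htail ihr =>
    rcases Finset.mem_insert.mp h' with he | hm
    · rw [Prod.mk.injEq] at he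
      obtain ⟨rfl, rfl⟩ := he
      rcases ihr with h1 | ⟨_, h2⟩
      · exact Or.inr ⟨Relation.ReflTransGen.refl, h1.to_reflTransGen⟩
      · exact Or.inr ⟨Relation.ReflTransGen.refl, h2⟩
    · rcases ihr with h1 | ⟨h1, h2⟩
      · exact Or.inl (Relation.TransGen.head hm h1)
      · exact Or.inr ⟨Relation.ReflTransGen.head hm h1, h2⟩

lemma exists_max_acyclic (A : V → V → Prop) (hirr : Irreflexive A) (R : Finset V) :
    ∃ S : Finset (V × V), (∀ e ∈ S, A e.1 e.2 ∧ e.1 ∈ R ∧ e.2 ∈ R) ∧ Acy S ∧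
      ∀ a b : V, a ∈ R → b ∈ R → A a b → (a, b) ∉ S →
        Relation.TransGen (SRel S) b a := by
  classical
  set arcs := Finset.univ.filter (fun e : V × V => A e.1 e.2 ∧ e.1 ∈ R ∧ e.2 ∈ R) with harcs
  set Fam := arcs.powerset.filter (fun S => Acy S) with hFam
  have hne : Fam.Nonempty := by
    refine ⟨∅, Finset.mem_filter.mpr ⟨Finset.empty_mem_powerset _, ?_⟩⟩
    intro x h
    obtain ⟨c, h, -⟩ := Relation.TransGen.head'_iff.mp h
    simp [SRel] at h
  obtain ⟨S, hSF, hmax'⟩ := Finset.exists_maximal hne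
  have hmax : ∀ x ∈ Fam, ¬ S < x := fun x hx hlt => lt_irrefl S (lt_of_lt_of_le hlt (hmax' hx hlt.le))
  rw [hFam, Finset.mem_filter, Finset.mem_powerset] at hSF
  obtain ⟨hSsub, hSacy⟩ := hSF
  refine ⟨S, ?_, hSacy, ?_⟩
  · intro e he
    have := hSsub he
    rw [harcs, Finset.mem_filter] at this
    exact this.2
  · intro a b ha hb hab hnS
    have hmem : (a, b) ∈ arcs := by
      rw [harcs, Finset.mem_filter]
      exact ⟨Finset.mem_univ _, hab, ha, hb⟩
    have hins : insert (a,b) S ∉ Fam := by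
      intro hin'
      exact hmax _ hin' (Finset.ssubset_insert hnS)
    have : ¬ Acy (insert (a,b) S) := by
      intro hacy
      refine hins (Finset.mem_filter.mpr ⟨Finset.mem_powerset.mpr ?_, hacy⟩)
      intro e he
      rcases Finset.mem_insert.mp he with rfl | he
      · exact hmem
      · exact hSsub he
    rw [Acy] at this
    push_neg at this
    obtain ⟨x, hx⟩ := this
    rcases transGen_insert hx with h | ⟨h1, h2⟩
    · exact absurd h (hSacy x)
    · have hba : Relation.ReflTransGen (SRel S) b a := h2.trans h1
      rcases Relation.reflTransGen_iff_eq_or_transGen.mp hba with he | ht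
      · exact absurd (he ▸ hab) (hirr a)
      · exact ht

lemma chain'_head_rel {Rr : V → V → Prop} :
    ∀ (l : List V) (v x : V), l.Chain' Rr → l.head? = some v → x ∈ l →
      x = v ∨ Relation.TransGen Rr v x := by
  intro l
  induction l with
  | nil => intro v x _ _ hx; simp at hx
  | cons a t iht =>
    intro v x hch hhead hx
    simp at hhead
    subst hhead
    rcases List.mem_cons.mp hx with rfl | hx
    · exact Or.inl rfl
    · cases t with
      | nil => simp at hx
      | cons b t' =>
        have hab : Rr a b := (List.isChain_cons_cons.mp hch).1
        have hcht : (b :: t').Chain' Rr := (List.isChain_cons_cons.mp hch).2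
        rcases iht b x hcht (by simp) hx with rfl | h
        · exact Or.inr (Relation.TransGen.single hab)
        · exact Or.inr (Relation.TransGen.head hab h)

/-- Level of a vertex: length of a longest `S`-path starting at it. -/
noncomputable def lev (S : Finset (V × V)) (r : V) : ℕ :=
  sSup {n | ∃ l : List V, (l ≠ [] ∧ l.Nodup ∧ l.Chain' (SRel S)) ∧
    l.head? = some r ∧ l.length = n}

lemma lev_set_bdd (S : Finset (V × V)) (r : V) :
    BddAbove {n | ∃ l : List V, (l ≠ [] ∧ l.Nodup ∧ l.Chain' (SRel S)) ∧
      l.head? = some r ∧ l.length = n} := by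
  refine ⟨Fintype.card V, fun n hn => ?_⟩
  obtain ⟨l, hl, _, hlen⟩ := hn
  exact hlen ▸ hl.2.1.length_le_card

lemma lev_set_nonempty (S : Finset (V × V)) (r : V) :
    Set.Nonempty {n | ∃ l : List V, (l ≠ [] ∧ l.Nodup ∧ l.Chain' (SRel S)) ∧
      l.head? = some r ∧ l.length = n} :=
  ⟨1, [r], ⟨by simp, by simp, List.isChain_singleton _⟩, by simp, by simp⟩

lemma lev_spec (S : Finset (V × V)) (r : V) :
    ∃ l : List V, (l ≠ [] ∧ l.Nodup ∧ l.Chain' (SRel S)) ∧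
      l.head? = some r ∧ l.length = lev S r :=
  Nat.sSup_mem (lev_set_nonempty S r) (lev_set_bdd S r)

lemma le_lev (S : Finset (V × V)) {r : V} {l : List V}
    (hl : l ≠ [] ∧ l.Nodup ∧ l.Chain' (SRel S)) (hh : l.head? = some r) :
    l.length ≤ lev S r :=
  le_csSup (lev_set_bdd S r) ⟨l, hl, hh, rfl⟩

lemma lev_pos (S : Finset (V × V)) (r : V) : 1 ≤ lev S r :=
  le_lev S (l := [r]) ⟨by simp, by simp, List.isChain_singleton _⟩ (by simp)

lemma lev_arc (S : Finset (V × V)) (hacy : Acy S) {a b : V} (hab : (a,b) ∈ S) :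
    lev S b < lev S a := by
  obtain ⟨l, hl, hh, hlen⟩ := lev_spec S b
  have hal : a ∉ l := by
    intro hmem
    rcases chain'_head_rel l b a hl.2.2 hh hmem with rfl | ht
    · exact hacy a (Relation.TransGen.single hab)
    · exact hacy a (Relation.TransGen.head hab ht)
  have : (a :: l).length ≤ lev S a := by
    refine le_lev S ⟨by simp, List.nodup_cons.mpr ⟨hal, hl.2.1⟩, ?_⟩ (by simp)
    rw [List.Chain', List.isChain_cons]
    refine ⟨?_, hl.2.2⟩
    intro y hy
    rw [hh] at hy
    simp at hy
    exact hy ▸ hab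
  simp at this
  omega

lemma lev_transGen (S : Finset (V × V)) (hacy : Acy S) {a b : V}
    (h : Relation.TransGen (SRel S) a b) : lev S b < lev S a := by
  induction h with
  | single h => exact lev_arc S hacy h
  | tail _ h ih => exact lt_trans (lev_arc S hacy h) ih

end Acyclic
section TStable

variable {A : V → V → Prop} {k : ℕ} {P : Finset (List V)}

lemma take_concat {p : List V} {i : ℕ} (h : i < p.length) :
    p.take (i+1) = p.take i ++ [p.get ⟨i, h⟩] := by
  rw [List.take_succ, List.getElem?_eq_getElem h]
  rfl

lemma isPath_take (hpath : IsPath A p) {n : ℕ} (hn : 1 ≤ n) :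
    IsPath A (p.take n) := by
  refine ⟨?_, (nodup_take_drop hpath.2.1 n).1, chain'_take hpath.2.2 n⟩
  have h1 : 1 ≤ p.length := by
    cases hl : p with
    | nil => exact absurd hl hpath.1
    | cons _ _ => simp [hl]
  apply List.ne_nil_of_length_pos
  simp
  omega

/-- Key surgery: the `j`-th vertices from the end of two distinct paths of an
optimal pack are non-adjacent, provided there is an uncovered path of `j` vertices. -/
lemma T_stable (hP : OptimalKPack A k P) (hin : InSemicomplete A)
    {p q : List V} (hp : p ∈ P) (hq : q ∈ P) (hpq : p ≠ q)
    {j : ℕ} (hj1 : 1 ≤ j) (hjp : j ≤ p.length) (hjq : j ≤ q.length)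
    {l' : List V} (hl' : IsPath A l') (hun : ∀ x ∈ l', Unc P x) (hlen' : l'.length = j)
    (harc : A (p.get ⟨p.length - j, by omega⟩) (q.get ⟨q.length - j, by omega⟩)) :
    False := by
  have hpd := hP.1.2.2
  have hppath := hP.1.2.1 p hp
  have hqpath := hP.1.2.1 q hq
  have hplen : 1 ≤ p.length := by omega
  have hqlen : 1 ≤ q.length := by omega
  set ip := p.length - j with hip
  set iq := q.length - j with hiq
  have hip' : ip < p.length := by omega
  have hiq' : iq < q.length := by omega
  set a := p.get ⟨ip, hip'⟩ with ha
  set b := q.get ⟨iq, hiq'⟩ with hb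
  have hpt : p.take (ip+1) = p.take ip ++ [a] := take_concat hip'
  have hqt : q.take (iq+1) = q.take iq ++ [b] := take_concat hiq'
  have hppath' : IsPath A (p.take ip ++ [a]) := hpt ▸ isPath_take hppath (by omega)
  have hqpath' : IsPath A (q.take iq ++ [b]) := hqt ▸ isPath_take hqpath (by omega)
  have hpsub : ∀ x ∈ p.take ip ++ [a], x ∈ p := by
    intro x hx
    rw [← hpt] at hx
    exact List.mem_of_mem_take hx
  have hqsub : ∀ x ∈ q.take iq ++ [b], x ∈ q := by
    intro x hx
    rw [← hqt] at hx
    exact List.mem_of_mem_take hx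
  obtain ⟨z, hzpath, hzf⟩ := merge_lemma hin ((p.take ip).length + (q.take iq).length)
    (p.take ip) (q.take iq) a b le_rfl hppath' hqpath'
    (fun x hx hx' => hpd p hp q hq hpq x (hpsub x hx) (hqsub x hx'))
    harc
  have hzmem : ∀ x, x ∈ z ++ [b] ↔ x ∈ p.take ip ++ [a] ∨ x ∈ q.take iq ++ [b] := by
    intro x
    rw [← List.mem_toFinset, hzf]
    simp
    tauto
  -- the merged path
  set merged := (z ++ [b]) ++ q.drop (iq + 1) with hmerged
  have hdisjpq : ∀ x ∈ p, x ∉ q := fun x hx => hpd p hp q hq hpq x hx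
  have hqnd := nodup_take_drop hqpath.2.1 (iq + 1)
  have hmpath : IsPath A merged := by
    refine ⟨by simp [hmerged], ?_, ?_⟩
    · rw [hmerged, List.nodup_append]
      refine ⟨hzpath.2.1, hqnd.2.1, ?_⟩
      intro x hx y hx' hxy
      subst hxy
      rcases (hzmem x).mp hx with h | h
      · exact hdisjpq x (hpsub x h) (List.mem_of_mem_drop hx')
      · exact hqnd.2.2 x (hqt ▸ h) hx'
    · rw [hmerged, List.Chain', List.isChain_append]
      refine ⟨hzpath.2.2, chain'_drop hqpath.2.2 _, ?_⟩
      intro x hx y hy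
      rw [List.getLast?_concat] at hx
      simp at hx
      subst hx
      have hiq2 : iq + 1 < q.length := by
        by_contra hcon
        have : q.drop (iq+1) = [] := List.drop_eq_nil_of_le (by omega)
        rw [this] at hy
        simp at hy
      rw [head?_eq_get hiq2] at hy
      simp at hy
      subst hy
      have := List.isChain_iff_getElem.mp hqpath.2.2 iq (by omega)
      exact this
  -- length of z ++ [b]
  have hznd := hzpath.2.1
  have hzlen : (z ++ [b]).length = (ip + 1) + (iq + 1) := by
    have h1 : (z ++ [b]).toFinset.card = (z ++ [b]).length :=
      List.toFinset_card_of_nodup hznd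
    have h2 : (p.take ip ++ [a]).toFinset.card = ip + 1 := by
      rw [List.toFinset_card_of_nodup (hpt ▸ (nodup_take_drop hppath.2.1 (ip+1)).1)]
      simp
      omega
    have h3 : (q.take iq ++ [b]).toFinset.card = iq + 1 := by
      rw [List.toFinset_card_of_nodup (hqt ▸ (nodup_take_drop hqpath.2.1 (iq+1)).1)]
      simp
      omega
    have hdisj : Disjoint (p.take ip ++ [a]).toFinset (q.take iq ++ [b]).toFinset := by
      rw [Finset.disjoint_left]
      intro x hx hx'
      rw [List.mem_toFinset] at hx hx'
      exact hdisjpq x (hpsub x hx) (hqsub x hx')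
    have h4 : (z ++ [b]).toFinset.card = ip + 1 + (iq + 1) := by
      rw [hzf, Finset.card_union_of_disjoint hdisj, h2, h3]
    rw [h1] at h4
    exact h4
  have hmlen : merged.length = p.length + q.length - j + 1 := by
    have e1 : merged.length = (z ++ [b]).length + (q.drop (iq+1)).length := by
      rw [hmerged]; simp; omega
    have e2 : (q.drop (iq+1)).length = q.length - (iq+1) := by simp
    omega
  -- apply replace_two with merged and l'
  have h12 : ∀ x ∈ merged, x ∉ l' := by
    intro x hx hx'
    have hxpq : x ∈ p ∨ x ∈ q := by
      rw [hmerged] at hx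
      rcases List.mem_append.mp hx with hx | hx
      · rcases (hzmem x).mp hx with h | h
        · exact Or.inl (hpsub x h)
        · exact Or.inr (hqsub x h)
      · exact Or.inr (List.mem_of_mem_drop hx)
    rcases hxpq with h | h
    · exact hun x hx' p hp h
    · exact hun x hx' q hq h
  have hle := replace_two hP hp hq hpq hmpath hl'
    (fun w hw hwp hwq x hx => by
      rcases hx with hx | hx
      · rw [hmerged] at hx
        have hxpq : x ∈ p ∨ x ∈ q := by
          rcases List.mem_append.mp hx with hx | hx
          · rcases (hzmem x).mp hx with h | h
            · exact Or.inl (hpsub x h)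
            · exact Or.inr (hqsub x h)
          · exact Or.inr (List.mem_of_mem_drop hx)
        rcases hxpq with h | h
        · exact hpd p hp w hw (fun e => hwp e.symm) x h
        · exact hpd q hq w hw (fun e => hwq e.symm) x h
      · exact hun x hx w hw)
    h12
  omega

end TStable
section Assembly

variable {A : V → V → Prop} {k : ℕ} {P : Finset (List V)}

lemma transGen_mem_R {S : Finset (V × V)} {R : Finset V}
    (hSarc : ∀ e ∈ S, A e.1 e.2 ∧ e.1 ∈ R ∧ e.2 ∈ R) {a b : V}
    (h : Relation.TransGen (SRel S) a b) : b ∈ R := by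
  induction h with
  | single h => exact (hSarc _ h).2.2
  | tail _ h _ => exact (hSarc _ h).2.2

lemma covered_coloring (A : V → V → Prop) (k : ℕ) (P : Finset (List V))
    (hcov : ∀ v : V, ∃ p ∈ P, v ∈ p) :
    ∃ C : Finset (Finset V), IsColoring A C ∧ OrthoCP k C P := by
  refine ⟨Finset.univ.image (fun v => ({v} : Finset V)), ⟨?_, ?_, ?_, ?_⟩, ?_⟩
  · intro c hc
    obtain ⟨v, -, rfl⟩ := Finset.mem_image.mp hc
    intro u hu w hw hne
    simp at hu hw
    exact absurd (hu.trans hw.symm) hne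
  · intro c hc
    obtain ⟨v, -, rfl⟩ := Finset.mem_image.mp hc
    exact ⟨v, Finset.mem_singleton_self v⟩
  · intro c hc c' hc' hne
    obtain ⟨v, -, rfl⟩ := Finset.mem_image.mp hc
    obtain ⟨w, -, rfl⟩ := Finset.mem_image.mp hc'
    simp [Finset.disjoint_left]
    intro h
    exact hne (h ▸ rfl)
  · intro v
    exact ⟨{v}, Finset.mem_image.mpr ⟨v, Finset.mem_univ v, rfl⟩, Finset.mem_singleton_self v⟩
  · intro c hc
    obtain ⟨v, -, rfl⟩ := Finset.mem_image.mp hc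
    obtain ⟨p, hp, hvp⟩ := hcov v
    have h1 : p ∈ P.filter (fun p => ∃ x ∈ ({v} : Finset V), x ∈ p) :=
      Finset.mem_filter.mpr ⟨hp, v, Finset.mem_singleton_self v, hvp⟩
    have h2 : 1 ≤ (P.filter (fun p => ∃ x ∈ ({v} : Finset V), x ∈ p)).card :=
      Finset.card_pos.mpr ⟨p, h1⟩
    exact le_trans (by simp) h2

theorem stmt8_aux (hirr : Irreflexive A) (hin : InSemicomplete A)
    (hk : 0 < k) (hP : OptimalKPack A k P) :
    ∃ C : Finset (Finset V), IsColoring A C ∧ OrthoCP k C P := by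
  classical
  by_cases hcov : ∀ v : V, ∃ p ∈ P, v ∈ p
  · exact covered_coloring A k P hcov
  -- there is an uncovered vertex
  push_neg at hcov
  obtain ⟨r, hr0⟩ := hcov
  have hr : Unc P r := fun p hp hmem => hr0 p hp hmem
  have hpd := hP.1.2.2
  have hpaths := hP.1.2.1
  have hcard : P.card = k := card_eq_k hP hr
  set Runc : Finset V := Finset.univ.filter (fun v => Unc P v) with hRuncDef
  have hRunc_mem : ∀ v, v ∈ Runc ↔ Unc P v := by
    intro v; rw [hRuncDef, Finset.mem_filter]; simp
  obtain ⟨S, hSarc, hSacy, hSmax⟩ := exists_max_acyclic A hirr Runc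
  set lv : V → ℕ := lev S with hlv
  -- witness uncovered paths
  have hwitness : ∀ u ∈ Runc, ∃ l' : List V, IsPath A l' ∧ (∀ x ∈ l', Unc P x) ∧
      l'.length = lv u ∧ l'.head? = some u := by
    intro u hu
    obtain ⟨l, hl, hh, hlen⟩ := lev_spec S u
    refine ⟨l, ⟨hl.1, hl.2.1, hl.2.2.imp (fun a b h => (hSarc (a,b) h).1)⟩, ?_, hlen, hh⟩
    intro x hx
    rcases chain'_head_rel l u x hl.2.2 hh hx with rfl | ht
    · exact (hRunc_mem x).mp hu
    · exact (hRunc_mem x).mp (transGen_mem_R hSarc ht)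
  -- levels are at least 1 and at most any path length
  have hlev_le : ∀ u ∈ Runc, ∀ p ∈ P, lv u ≤ p.length := by
    intro u hu p hp
    obtain ⟨l', hl', hun', hlen', -⟩ := hwitness u hu
    exact hlen' ▸ unc_path_le hP hp hl' hun'
  -- stability of level classes
  have hlev_stab : ∀ u ∈ Runc, ∀ v ∈ Runc, lv u = lv v → DAdj A u v → False := by
    have harc1 : ∀ u ∈ Runc, ∀ v ∈ Runc, A u v → lv u = lv v → False := by
      intro u hu v hv hadj heq
      by_cases hS : (u, v) ∈ S
      · have h2 := lev_arc S hSacy hS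
        rw [← hlv] at h2
        omega
      · have h2 := lev_transGen S hSacy (hSmax u v hu hv hadj hS)
        rw [← hlv] at h2
        omega
    intro u hu v hv heq hadj
    rcases hadj with h | h
    · exact harc1 u hu v hv h heq
    · exact harc1 v hv u hu h heq.symm
  set J : Finset ℕ := Runc.image lv with hJ
  have hJmem : ∀ j ∈ J, ∃ u ∈ Runc, lv u = j := by
    intro j hj
    obtain ⟨u, hu, he⟩ := Finset.mem_image.mp hj
    exact ⟨u, hu, he⟩
  have hJ1 : ∀ j ∈ J, 1 ≤ j := by
    intro j hj
    obtain ⟨u, -, rfl⟩ := hJmem j hj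
    exact lev_pos S u
  have hJle : ∀ j ∈ J, ∀ p ∈ P, j ≤ p.length := by
    intro j hj p hp
    obtain ⟨u, hu, rfl⟩ := hJmem j hj
    exact hlev_le u hu p hp
  -- transversal vertices
  set uj : List V → ℕ → V := fun p j => p.getD (p.length - j) r with hujdef
  have hujget : ∀ p ∈ P, ∀ j ∈ J, ∀ h : p.length - j < p.length,
      uj p j = p.get ⟨p.length - j, h⟩ := by
    intro p hp j hj h
    exact List.getD_eq_get p r ⟨_, h⟩
  have hujlt : ∀ p ∈ P, ∀ j ∈ J, p.length - j < p.length := by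
    intro p hp j hj
    have h1 := hJ1 j hj
    have h2 := hJle j hj p hp
    omega
  have hujmem : ∀ p ∈ P, ∀ j ∈ J, uj p j ∈ p := by
    intro p hp j hj
    rw [hujget p hp j hj (hujlt p hp j hj)]
    exact List.get_mem p _
  set T : ℕ → Finset V := fun j => P.image (fun p => uj p j) with hT
  set B : ℕ → Finset V := fun j => (Runc.filter (fun v => lv v = j)) ∪ T j with hB
  set Rest : Finset V := (Finset.univ \ Runc) \ (J.biUnion T) with hRest
  set C : Finset (Finset V) :=
    J.image B ∪ Rest.image (fun v => ({v} : Finset V)) with hC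
  -- uj is injective-ish
  have huj_inj : ∀ p ∈ P, ∀ q ∈ P, ∀ j ∈ J, ∀ j' ∈ J, uj p j = uj q j' →
      p = q ∧ j = j' := by
    intro p hp q hq j hj j' hj' he
    have hxp := hujmem p hp j hj
    have hxq : uj p j ∈ q := he ▸ hujmem q hq j' hj'
    have hpq : p = q := by
      by_contra hne
      exact hpd p hp q hq hne _ hxp hxq
    subst hpq
    refine ⟨rfl, ?_⟩
    rw [hujget p hp j hj (hujlt p hp j hj), hujget p hp j' hj' (hujlt p hp j' hj')] at he
    have := (hpaths p hp).2.1.get_inj_iff.mp he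
    have h1 := hJ1 j hj
    have h2 := hJ1 j' hj'
    have h3 := hJle j hj p hp
    have h4 := hJle j' hj' p hp
    simp at this
    omega
  -- membership structure of B j
  have hBmem : ∀ j ∈ J, ∀ x, x ∈ B j ↔
      (x ∈ Runc ∧ lv x = j) ∨ ∃ p ∈ P, uj p j = x := by
    intro j hj x
    simp only [hB, hT, Finset.mem_union, Finset.mem_filter, Finset.mem_image, Finset.mem_univ,
      true_and]
  -- T j vertices are covered
  have hTcov : ∀ j ∈ J, ∀ p ∈ P, ¬ Unc P (uj p j) := by
    intro j hj p hp hun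
    exact hun p hp (hujmem p hp j hj)
  -- stability of B j
  have hBstab : ∀ j ∈ J, DStable A ((B j : Finset V) : Set V) := by
    intro j hj u hu v hv hne hadj
    simp only [Finset.coe_union, Set.mem_union, Finset.mem_coe] at hu hv
    rw [hBmem j hj] at hu hv
    rcases hu with ⟨hu1, hu2⟩ | ⟨p, hp, hpe⟩
    · rcases hv with ⟨hv1, hv2⟩ | ⟨p, hp, hpe⟩
      · exact hlev_stab u hu1 v hv1 (hu2.trans hv2.symm) hadj
      · -- u uncovered of level j, v = uj p j
        obtain ⟨l', hl', hun', hlen', hh'⟩ := hwitness u hu1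
        have huUnc : Unc P u := (hRunc_mem u).mp hu1
        have hvmem : v ∈ p := by rw [← hpe]; exact hujmem p hp j hj
        rcases hadj with h | h
        · -- A u v with v covered: impossible
          exact no_unc_to_cover hP hin huUnc hp v hvmem h
        · -- A v u : extend p at position length - j by l'
          have hlt := hujlt p hp j hj
          have hhead : l'.head hl'.1 = u := by
            have := List.head?_eq_head hl'.1
            rw [hh'] at this
            simpa using this.symm
          have := extend_path_le hP hp hlt hl' hun'
            (by rw [hhead, ← hujget p hp j hj hlt, hpe]; exact h)
          have h1 := hJ1 j hj
          have h2 := hJle j hj p hp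
          omega
    · rcases hv with ⟨hv1, hv2⟩ | ⟨q, hq, hqe⟩
      · -- symmetric: u = uj p j, v uncovered
        obtain ⟨l', hl', hun', hlen', hh'⟩ := hwitness v hv1
        have hvUnc : Unc P v := (hRunc_mem v).mp hv1
        rcases hadj with h | h
        · have hlt := hujlt p hp j hj
          have hhead : l'.head hl'.1 = v := by
            have := List.head?_eq_head hl'.1
            rw [hh'] at this
            simpa using this.symm
          have := extend_path_le hP hp hlt hl' hun'
            (by rw [hhead, ← hujget p hp j hj hlt, hpe]; exact h)
          have h1 := hJ1 j hj
          have h2 := hJle j hj p hp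
          omega
        · have humem : u ∈ p := by rw [← hpe]; exact hujmem p hp j hj
          exact no_unc_to_cover hP hin hvUnc hp u humem h
      · -- both transversal vertices
        have hpq : p ≠ q := by
          intro he
          subst he
          exact hne (hpe.symm.trans hqe)
        obtain ⟨u0, hu0, hu0e⟩ := hJmem j hj
        obtain ⟨l', hl', hun', hlen', -⟩ := hwitness u0 hu0
        have hlenj : l'.length = j := by rw [hlen', hu0e]
        have h1 := hJ1 j hj
        have hjp := hJle j hj p hp
        have hjq := hJle j hj q hq
        rcases hadj with h | h
        · exact T_stable hP hin hp hq hpq h1 hjp hjq hl' hun' hlenj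
            (by rw [← hujget p hp j hj (hujlt p hp j hj), ← hujget q hq j hj (hujlt q hq j hj),
                hpe, hqe]; exact h)
        · exact T_stable hP hin hq hp (fun e => hpq e.symm) h1 hjq hjp hl' hun' hlenj
            (by rw [← hujget q hq j hj (hujlt q hq j hj), ← hujget p hp j hj (hujlt p hp j hj),
                hqe, hpe]; exact h)
  -- disjointness of distinct classes
  have hBdisj : ∀ j ∈ J, ∀ j' ∈ J, j ≠ j' → Disjoint (B j) (B j') := by
    intro j hj j' hj' hne
    rw [Finset.disjoint_left]
    intro x hx hx'
    rw [hBmem j hj] at hx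
    rw [hBmem j' hj'] at hx'
    rcases hx with ⟨h1, h2⟩ | ⟨p, hp, hpe⟩
    · rcases hx' with ⟨h1', h2'⟩ | ⟨p, hp, hpe⟩
      · exact hne (h2.symm.trans h2')
      · exact hTcov j' hj' p hp (by rw [hpe]; exact (hRunc_mem x).mp h1)
    · rcases hx' with ⟨h1', h2'⟩ | ⟨q, hq, hqe⟩
      · exact hTcov j hj p hp (by rw [hpe]; exact (hRunc_mem x).mp h1')
      · exact hne (huj_inj p hp q hq j hj j' hj' (hpe.trans hqe.symm)).2
  -- the coloring works
  refine ⟨C, ⟨?_, ?_, ?_, ?_⟩, ?_⟩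
  · -- stability
    intro c hc
    rw [hC, Finset.mem_union] at hc
    rcases hc with hc | hc
    · obtain ⟨j, hj, rfl⟩ := Finset.mem_image.mp hc
      exact hBstab j hj
    · obtain ⟨v, -, rfl⟩ := Finset.mem_image.mp hc
      intro u hu w hw hne
      simp at hu hw
      exact absurd (hu.trans hw.symm) hne
  · -- nonempty
    intro c hc
    rw [hC, Finset.mem_union] at hc
    rcases hc with hc | hc
    · obtain ⟨j, hj, rfl⟩ := Finset.mem_image.mp hc
      obtain ⟨u, hu, hue⟩ := hJmem j hj
      exact ⟨u, by rw [hBmem j hj]; exact Or.inl ⟨hu, hue⟩⟩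
    · obtain ⟨v, -, rfl⟩ := Finset.mem_image.mp hc
      exact ⟨v, Finset.mem_singleton_self v⟩
  · -- disjointness
    intro c hc c' hc' hne
    rw [hC, Finset.mem_union] at hc hc'
    have hsing : ∀ v ∈ Rest, ∀ j ∈ J, Disjoint (B j) ({v} : Finset V) := by
      intro v hv j hj
      rw [Finset.disjoint_right]
      intro x hx hx'
      simp at hx
      subst hx
      rw [hRest] at hv
      simp only [Finset.mem_sdiff, Finset.mem_univ, true_and] at hv
      rw [hBmem j hj] at hx'
      rcases hx' with ⟨h1, -⟩ | ⟨p, hp, hpe⟩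
      · exact hv.1 h1
      · refine hv.2 (Finset.mem_biUnion.mpr ⟨j, hj, ?_⟩)
        rw [hT]
        exact Finset.mem_image.mpr ⟨p, hp, hpe⟩
    rcases hc with hc | hc
    · obtain ⟨j, hj, rfl⟩ := Finset.mem_image.mp hc
      rcases hc' with hc' | hc'
      · obtain ⟨j', hj', rfl⟩ := Finset.mem_image.mp hc'
        have : j ≠ j' := fun e => hne (e ▸ rfl)
        exact hBdisj j hj j' hj' this
      · obtain ⟨v, hv, rfl⟩ := Finset.mem_image.mp hc'
        exact hsing v hv j hj
    · obtain ⟨v, hv, rfl⟩ := Finset.mem_image.mp hc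
      rcases hc' with hc' | hc'
      · obtain ⟨j, hj, rfl⟩ := Finset.mem_image.mp hc'
        exact (hsing v hv j hj).symm
      · obtain ⟨w, hw, rfl⟩ := Finset.mem_image.mp hc'
        rw [Finset.disjoint_left]
        intro x hx hx'
        simp at hx hx'
        exact hne (hx ▸ hx' ▸ rfl)
  · -- covering
    intro v
    by_cases hv : v ∈ Runc
    · refine ⟨B (lv v), ?_, ?_⟩
      · rw [hC, Finset.mem_union]
        exact Or.inl (Finset.mem_image.mpr ⟨lv v, Finset.mem_image.mpr ⟨v, hv, rfl⟩, rfl⟩)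
      · rw [hBmem (lv v) (Finset.mem_image.mpr ⟨v, hv, rfl⟩)]
        exact Or.inl ⟨hv, rfl⟩
    · by_cases hv' : v ∈ J.biUnion T
      · obtain ⟨j, hj, hvT⟩ := Finset.mem_biUnion.mp hv'
        refine ⟨B j, ?_, ?_⟩
        · rw [hC, Finset.mem_union]
          exact Or.inl (Finset.mem_image.mpr ⟨j, hj, rfl⟩)
        · rw [hB]
          exact Finset.mem_union_right _ hvT
      · refine ⟨{v}, ?_, Finset.mem_singleton_self v⟩
        rw [hC, Finset.mem_union]
        refine Or.inr (Finset.mem_image.mpr ⟨v, ?_, rfl⟩)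
        rw [hRest]
        simp only [Finset.mem_sdiff, Finset.mem_univ, true_and]
        exact ⟨hv, hv'⟩
  · -- orthogonality
    intro c hc
    rw [hC, Finset.mem_union] at hc
    rcases hc with hc | hc
    · obtain ⟨j, hj, rfl⟩ := Finset.mem_image.mp hc
      have hfil : P.filter (fun p => ∃ x ∈ B j, x ∈ p) = P := by
        refine Finset.filter_true_of_mem ?_
        intro p hp
        refine ⟨uj p j, ?_, hujmem p hp j hj⟩
        rw [hBmem j hj]
        exact Or.inr ⟨p, hp, rfl⟩
      rw [hfil, hcard]
      exact min_le_right _ _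
    · obtain ⟨v, hv, rfl⟩ := Finset.mem_image.mp hc
      have hvcov : ¬ Unc P v := by
        rw [hRest] at hv
        simp only [Finset.mem_sdiff, Finset.mem_univ, true_and] at hv
        intro h
        exact hv.1 ((hRunc_mem v).mpr h)
      rw [Unc] at hvcov
      push_neg at hvcov
      obtain ⟨p, hp, hvp⟩ := hvcov
      have h1 : p ∈ P.filter (fun p => ∃ x ∈ ({v} : Finset V), x ∈ p) :=
        Finset.mem_filter.mpr ⟨hp, v, Finset.mem_singleton_self v, hvp⟩
      have h2 : 1 ≤ (P.filter (fun p => ∃ x ∈ ({v} : Finset V), x ∈ p)).card :=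
        Finset.card_pos.mpr ⟨p, h1⟩
      exact le_trans (by simp) h2

end Assembly

/-- Aharoni-Hartman-Hoffman's Conjecture for in-semicomplete digraphs. -/
theorem stmt8 (A : V → V → Prop) (hirr : Irreflexive A) (hin : InSemicomplete A)
    (k : ℕ) (hk : 0 < k) (P : Finset (List V)) (hP : OptimalKPack A k P) :
    ∃ C : Finset (Finset V), IsColoring A C ∧ OrthoCP k C P := by
  exact stmt8_aux hirr hin hk hP

end DigraphPaper
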